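/- Given sequences c₀,…,cₙ of nonnegative integers and h₀,…,hₙ of desired homology dimensions, define r₀ = 0 and r_{i+1} = cᵢ − rᵢ − hᵢ recursively. Then a complex A₁,…,Aₙ with Aᵢ ∈ ℝ^{c_{i-1}×c_i}, rank Aᵢ = rᵢ, and dim(ker Aᵢ/image A_{i+1}) = hᵢ for all i exists if and only if rᵢ ≥ 0 for all 1 ≤ i ≤ n and r_{n+1} = 0. -/
import Mathlib

open Matrix

set_option maxHeartbeats 1000000
set_option synthInstance.maxHeartbeats 1000000

/-- The dimension of the homology of the complex `… → ℝ^{c (i+1)} → ℝ^{c i} → …` (where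
`A i` represents the differential `A_{i+1} : ℝ^{c (i+1)} → ℝ^{c i}` and `A₀ = 0` by
convention) at position `i`, i.e. `dim (ker A_i / image A_{i+1})`. -/
noncomputable def homologyDim (c : ℕ → ℕ) (A : ∀ i : ℕ, Matrix (Fin (c i)) (Fin (c (i+1))) ℝ) : ℕ → ℕ
  | 0 => Module.finrank ℝ ((Fin (c 0) → ℝ) ⧸ LinearMap.range (Matrix.toLin' (A 0)))
  | (i+1) => Module.finrank ℝ
      (↥(LinearMap.ker (Matrix.toLin' (A i))) ⧸
        (LinearMap.range (Matrix.toLin' (A (i+1)))).comap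
          (LinearMap.ker (Matrix.toLin' (A i))).subtype)

lemma rank_eq_finrank_range' {m k : ℕ} (A : Matrix (Fin m) (Fin k) ℝ) :
    A.rank = Module.finrank ℝ (LinearMap.range (Matrix.toLin' A)) := by
  have : LinearMap.range (Matrix.toLin' A) = LinearMap.range A.mulVecLin := by
    ext x; simp [Matrix.toLin'_apply, Matrix.mulVecLin]
  rw [this]; rfl

lemma rank_add_ker' {m k : ℕ} (A : Matrix (Fin m) (Fin k) ℝ) :
    A.rank + Module.finrank ℝ (LinearMap.ker (Matrix.toLin' A)) = k := by
  rw [rank_eq_finrank_range', LinearMap.finrank_range_add_finrank_ker]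
  simp [Module.finrank_fin_fun]

lemma homologyDim_zero (c : ℕ → ℕ) (A : ∀ i : ℕ, Matrix (Fin (c i)) (Fin (c (i+1))) ℝ) :
    homologyDim c A 0 + (A 0).rank = c 0 := by
  rw [homologyDim, rank_eq_finrank_range']
  rw [Submodule.finrank_quotient_add_finrank]
  simp [Module.finrank_fin_fun]

lemma homologyDim_succ (c : ℕ → ℕ) (A : ∀ i : ℕ, Matrix (Fin (c i)) (Fin (c (i+1))) ℝ)
    (i : ℕ) (hc : A i * A (i+1) = 0) :
    homologyDim c A (i+1) + (A i).rank + (A (i+1)).rank = c (i+1) := by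
  have hle : LinearMap.range (Matrix.toLin' (A (i+1))) ≤ LinearMap.ker (Matrix.toLin' (A i)) := by
    rw [LinearMap.range_le_ker_iff, ← Matrix.toLin'_mul, hc, map_zero _]
  have h1 : Module.finrank ℝ
      ((LinearMap.range (Matrix.toLin' (A (i+1)))).comap
        (LinearMap.ker (Matrix.toLin' (A i))).subtype)
      = Module.finrank ℝ (LinearMap.range (Matrix.toLin' (A (i+1)))) :=
    (Submodule.comapSubtypeEquivOfLe hle).finrank_eq
  have h2 := Submodule.finrank_quotient_add_finrank
    ((LinearMap.range (Matrix.toLin' (A (i+1)))).comap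
      (LinearMap.ker (Matrix.toLin' (A i))).subtype)
  rw [h1] at h2
  have h3 := rank_add_ker' (A i)
  have h4 := rank_eq_finrank_range' (A (i+1))
  rw [homologyDim]
  omega

def stdMat (m k ρ : ℕ) : Matrix (Fin m) (Fin k) ℝ :=
  Matrix.of fun a b => if (b : ℕ) < ρ ∧ (a : ℕ) = (b : ℕ) + (m - ρ) then 1 else 0

lemma stdMat_zero (m k : ℕ) : stdMat m k 0 = 0 := by
  ext a b; simp [stdMat]

lemma stdMat_mul {m k l ρ₁ ρ₂ : ℕ} (h : ρ₁ + ρ₂ ≤ k) :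
    stdMat m k ρ₁ * stdMat k l ρ₂ = 0 := by
  ext a c
  rw [Matrix.mul_apply]
  apply Finset.sum_eq_zero
  intro b _
  simp only [stdMat, Matrix.of_apply, Matrix.zero_apply]
  split_ifs with h1 h2 <;> try simp
  exfalso; omega

lemma stdMat_transpose_mul {m k ρ : ℕ} (hm : ρ ≤ m) :
    (stdMat m k ρ)ᵀ * stdMat m k ρ
      = Matrix.diagonal (fun b : Fin k => if (b : ℕ) < ρ then (1:ℝ) else 0) := by
  ext b b'
  rw [Matrix.mul_apply]
  by_cases hbb : (b : ℕ) = (b' : ℕ) ∧ (b : ℕ) < ρ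
  · obtain ⟨hbeq, hblt⟩ := hbb
    have hbb' : b = b' := Fin.ext hbeq
    subst hbb'
    have ha0 : ((b : ℕ) + (m - ρ)) < m := by omega
    rw [Finset.sum_eq_single (⟨(b : ℕ) + (m - ρ), ha0⟩ : Fin m)]
    · simp [stdMat, transpose_apply, hblt, Matrix.diagonal, Fin.ext_iff]
    · intro a _ ha
      simp only [stdMat, transpose_apply, Matrix.of_apply]
      split_ifs with h1 _ <;> try simp
      exfalso; exact ha (Fin.ext h1.2)
    · intro habs; exact absurd (Finset.mem_univ _) habs
  · have hdiag : Matrix.diagonal (fun b : Fin k => if (b : ℕ) < ρ then (1:ℝ) else 0) b b' = 0 := by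
      by_cases hb : b = b'
      · subst hb
        simp only [Matrix.diagonal_apply_eq]
        have : ¬ (b : ℕ) < ρ := fun hlt => hbb ⟨rfl, hlt⟩
        simp [this]
      · exact Matrix.diagonal_apply_ne _ hb
    rw [hdiag]
    apply Finset.sum_eq_zero
    intro a _
    simp only [stdMat, transpose_apply, Matrix.of_apply]
    split_ifs with h1 h2 <;> try simp
    exfalso
    exact hbb ⟨by omega, h1.1⟩

lemma stdMat_rank {m k ρ : ℕ} (hm : ρ ≤ m) (hk : ρ ≤ k) :
    (stdMat m k ρ).rank = ρ := by
  rw [← Matrix.rank_transpose_mul_self, stdMat_transpose_mul hm, Matrix.rank_diagonal]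
  have e : {b : Fin k // ¬ (if (b : ℕ) < ρ then (1:ℝ) else 0) = 0} ≃ Fin ρ :=
    { toFun := fun b => ⟨(b : Fin k), by
        by_contra hc
        exact b.2 (by simp [Nat.not_lt.mp hc])⟩
      invFun := fun j => ⟨⟨(j : ℕ), lt_of_lt_of_le j.2 hk⟩, by simp [j.2]⟩
      left_inv := fun b => by ext; rfl
      right_inv := fun j => by ext; rfl }
  rw [Fintype.card_congr e, Fintype.card_fin]

/-- **Projection to a complex: feasibility.** Given desired dimensions `c 0, …, c n` and
homology dimensions `h 0, …, h n`, define `r 0 = 0` and `r (i+1) = c i - r i - h i`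
recursively (in `ℤ`).  Then a complex `A_1, …, A_n` (with `A i` representing
`A_{i+1} : ℝ^{c (i+1)} → ℝ^{c i}`, vanishing for indices beyond `n`) with `rank A_i = r i`
and `dim (ker A_i / image A_{i+1}) = h i` for all `i` exists if and only if `r i ≥ 0` for
all `1 ≤ i ≤ n` and `r (n+1) = 0`. -/
theorem complex_with_prescribed_ranks_and_homology_exists_iff
    (n : ℕ) (c h : ℕ → ℕ) (r : ℕ → ℤ)
    (hr0 : r 0 = 0) (hrrec : ∀ i, r (i+1) = (c i : ℤ) - r i - (h i : ℤ)) :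
    (∃ A : ∀ i : ℕ, Matrix (Fin (c i)) (Fin (c (i+1))) ℝ,
        (∀ i, A i * A (i+1) = 0) ∧
        (∀ i, n ≤ i → A i = 0) ∧
        (∀ i < n, ((A i).rank : ℤ) = r (i+1)) ∧
        (∀ i ≤ n, (homologyDim c A i : ℤ) = h i)) ↔
      ((∀ i, 1 ≤ i → i ≤ n → 0 ≤ r i) ∧ r (n+1) = 0) := by
  constructor
  · rintro ⟨A, hcx, hzero, hrank, hhom⟩
    constructor
    · intro i h1 hn
      obtain ⟨j, rfl⟩ : ∃ j, i = j + 1 := ⟨i - 1, by omega⟩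
      rw [← hrank j (by omega)]
      exact Int.natCast_nonneg _
    · cases n with
      | zero =>
        have h0 := hhom 0 le_rfl
        have hA0 : A 0 = 0 := hzero 0 le_rfl
        have hd := homologyDim_zero c A
        rw [hA0, Matrix.rank_zero] at hd
        have := hrrec 0
        omega
      | succ m =>
        have h0 := hhom (m+1) le_rfl
        have hd := homologyDim_succ c A m (hcx m)
        have hA : A (m+1) = 0 := hzero (m+1) le_rfl
        rw [hA, Matrix.rank_zero] at hd
        have hrm := hrank m (by omega)
        have := hrrec (m+1)
        omega
  · rintro ⟨hpos, hend⟩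
    set ρ : ℕ → ℕ := fun i => if i < n then (r (i+1)).toNat else 0 with hρdef
    have hρr : ∀ i, i < n → (ρ i : ℤ) = r (i+1) := by
      intro i hi
      have h1 : 0 ≤ r (i+1) := hpos (i+1) (by omega) (by omega)
      simp only [hρdef, hi, if_true]
      omega
    have hρ0 : ∀ i, n ≤ i → ρ i = 0 := by
      intro i hi; simp only [hρdef, Nat.not_lt.mpr hi, if_false]
    have hrnn : ∀ i, i ≤ n → 0 ≤ r i := by
      intro i hi
      rcases Nat.eq_zero_or_pos i with h0 | h0
      · rw [h0, hr0]
      · exact hpos i h0 hi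
    have h1 : ∀ i, ρ i ≤ c i := by
      intro i
      by_cases hi : i < n
      · have := hρr i hi
        have h2 := hrrec i
        have h3 := hrnn i (by omega)
        omega
      · rw [hρ0 i (by omega)]; omega
    have h3 : ∀ i, ρ i + ρ (i+1) ≤ c (i+1) := by
      intro i
      by_cases hi : i + 1 < n
      · have e1 := hρr i (by omega)
        have e2 := hρr (i+1) hi
        have e3 := hrrec (i+1)
        have e4 := hrnn (i+2) (by omega)
        omega
      · by_cases hi' : i < n
        · have hn : i + 1 = n := by omega
          have e1 := hρr i hi'
          have e2 := hρ0 (i+1) (by omega)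
          have e3 := hrrec (i+1)
          have e4 : r (i+1+1) = 0 := by rw [hn]; exact hend
          omega
        · rw [hρ0 i (by omega), hρ0 (i+1) (by omega)]
          omega
    have h2 : ∀ i, ρ i ≤ c (i+1) := fun i => le_trans (Nat.le_add_right _ _) (h3 i)
    refine ⟨fun i => stdMat (c i) (c (i+1)) (ρ i), fun i => stdMat_mul (h3 i), ?_, ?_, ?_⟩
    · intro i hi
      show stdMat (c i) (c (i+1)) (ρ i) = 0
      rw [hρ0 i hi, stdMat_zero]
    · intro i hi
      rw [stdMat_rank (h1 i) (h2 i), hρr i hi]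
    · intro i hi
      cases i with
      | zero =>
        have hd := homologyDim_zero c (fun i => stdMat (c i) (c (i+1)) (ρ i))
        rw [stdMat_rank (h1 0) (h2 0)] at hd
        by_cases h0 : 0 < n
        · have := hρr 0 h0
          have := hrrec 0
          omega
        · have hn0 : n = 0 := by omega
          have := hρ0 0 (by omega)
          have := hrrec 0
          rw [hn0] at hend
          omega
      | succ m =>
        have hd := homologyDim_succ c (fun i => stdMat (c i) (c (i+1)) (ρ i)) m
          (stdMat_mul (h3 m))
        rw [stdMat_rank (h1 m) (h2 m), stdMat_rank (h1 (m+1)) (h2 (m+1))] at hd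
        by_cases hmn : m + 1 < n
        · have e1 := hρr m (by omega)
          have e2 := hρr (m+1) hmn
          have e3 := hrrec (m+1)
          omega
        · have hn : m + 1 = n := by omega
          have e1 := hρr m (by omega)
          have e2 := hρ0 (m+1) (by omega)
          have e3 := hrrec (m+1)
          have e4 : r (m+1+1) = 0 := by rw [hn]; exact hend
          omega
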